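/- Fix k > 0, ρ ∈ (0,1), c₁ > 0, c₂ > 0, and let a ∈ ℝ be the unique real with g_{k,ρ}(−a) = c₁. Define J(t) := ∫_{t}^{∞} g_{k,ρ}(ρs − ρt − a)·φ(s) ds − c₁·Φ(−t) − c₂. Then J is strictly decreasing on ℝ, J(t) → +∞ as t → −∞, and J(t) → −c₂ as t → +∞; consequently J has a unique zero t* ∈ ℝ. -/

import Mathlib

open MeasureTheory Real Set Filter

/-- Standard normal density. -/
noncomputable def stdPhi (x : ℝ) : ℝ := (Real.sqrt (2 * Real.pi))⁻¹ * Real.exp (-x ^ 2 / 2)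

/-- Standard normal CDF. -/
noncomputable def stdPhiCDF (x : ℝ) : ℝ := ∫ u in Set.Iic x, stdPhi u

/-- Normalized expected-profit function `g_{k,ρ}`. -/
noncomputable def gkr (k ρ x : ℝ) : ℝ :=
  Real.exp (k * x + k ^ 2 * (1 - ρ ^ 2) / 2) *
      stdPhiCDF ((x + k * (1 - ρ ^ 2)) / Real.sqrt (1 - ρ ^ 2)) -
    stdPhiCDF (x / Real.sqrt (1 - ρ ^ 2))

/-- Free-entry residual along the activation-condition line `p = ρt + a`. -/
noncomputable def Jres (k ρ c₁ c₂ a t : ℝ) : ℝ :=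
  (∫ s in Set.Ici t, gkr k ρ (ρ * s - ρ * t - a) * stdPhi s) - c₁ * stdPhiCDF (-t) - c₂


lemma stdPhi_pos (x : ℝ) : 0 < stdPhi x := by
  unfold stdPhi
  positivity

lemma continuous_stdPhi : Continuous stdPhi := by
  unfold stdPhi
  continuity

lemma stdPhi_eq (x : ℝ) : stdPhi x = (Real.sqrt (2 * Real.pi))⁻¹ * Real.exp (-(1/2) * x ^ 2) := by
  unfold stdPhi; ring_nf

lemma integrable_stdPhi : Integrable stdPhi := by
  have : Integrable (fun x : ℝ => (Real.sqrt (2 * Real.pi))⁻¹ * Real.exp (-(1/2) * x ^ 2)) :=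
    (integrable_exp_neg_mul_sq (by norm_num)).const_mul _
  exact this.congr (by filter_upwards with x; rw [stdPhi_eq])

lemma integral_stdPhi : ∫ x, stdPhi x = 1 := by
  unfold stdPhi
  rw [integral_const_mul]
  have : ∀ x : ℝ, Real.exp (-x ^ 2 / 2) = Real.exp (-(1/2) * x ^ 2) := by intro x; ring_nf
  simp_rw [this]
  rw [integral_gaussian]
  rw [inv_mul_eq_div, div_eq_one_iff_eq (by positivity)]
  norm_num [mul_comm]

lemma exp_mul_stdPhi (b s : ℝ) :
    Real.exp (b * s) * stdPhi s = Real.exp (b ^ 2 / 2) * stdPhi (s - b) := by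
  unfold stdPhi
  rw [← mul_assoc, mul_comm (Real.exp (b*s)), mul_assoc, ← Real.exp_add, mul_comm (Real.exp (b^2/2)), mul_assoc, ← Real.exp_add]
  congr 1
  ring

lemma integrable_exp_mul_stdPhi (b : ℝ) : Integrable (fun s => Real.exp (b * s) * stdPhi s) := by
  simp_rw [exp_mul_stdPhi]
  exact ((integrable_stdPhi).comp_sub_right b).const_mul _

lemma integrable_exp_mul_stdPhi_shift (b c : ℝ) :
    Integrable (fun u => Real.exp (b * u) * stdPhi (u + c)) := by
  have h : ∀ u : ℝ, Real.exp (b * u) * stdPhi (u + c)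
      = Real.exp (-(b*c)) * (Real.exp (b * (u + c)) * stdPhi (u + c)) := by
    intro u
    rw [← mul_assoc, ← Real.exp_add]
    ring_nf
  simp_rw [h]
  exact ((integrable_exp_mul_stdPhi b).comp_add_right c).const_mul _

lemma integrableOn_stdPhi (s : Set ℝ) : IntegrableOn stdPhi s := integrable_stdPhi.integrableOn

lemma stdPhiCDF_eq (x : ℝ) :
    stdPhiCDF x = stdPhiCDF 0 + ∫ u in (0:ℝ)..x, stdPhi u := by
  unfold stdPhiCDF
  rw [← intervalIntegral.integral_Iic_sub_Iic (integrableOn_stdPhi _) (integrableOn_stdPhi _)]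
  ring

lemma hasDerivAt_stdPhiCDF (x : ℝ) : HasDerivAt stdPhiCDF (stdPhi x) x := by
  have h : HasDerivAt (fun u => ∫ t in (0:ℝ)..u, stdPhi t) (stdPhi x) x := by
    apply intervalIntegral.integral_hasDerivAt_right
    · exact integrable_stdPhi.intervalIntegrable
    · exact continuous_stdPhi.stronglyMeasurable.stronglyMeasurableAtFilter
    · exact continuous_stdPhi.continuousAt
  have := h.const_add (stdPhiCDF 0)
  simpa [← stdPhiCDF_eq] using this

lemma continuous_stdPhiCDF : Continuous stdPhiCDF := by
  refine continuous_iff_continuousAt.mpr fun x => (hasDerivAt_stdPhiCDF x).continuousAt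

lemma strictMono_stdPhiCDF : StrictMono stdPhiCDF := by
  apply strictMono_of_deriv_pos
  intro x
  rw [(hasDerivAt_stdPhiCDF x).deriv]
  exact stdPhi_pos x

lemma stdPhiCDF_pos (x : ℝ) : 0 < stdPhiCDF x := by
  unfold stdPhiCDF
  rw [setIntegral_pos_iff_support_of_nonneg_ae]
  · have : Function.support stdPhi ∩ Iic x = Iic x := by
      rw [inter_eq_right]
      intro u _
      exact (stdPhi_pos u).ne'
    rw [this, Real.volume_Iic]
    simp
  · filter_upwards with u using (stdPhi_pos u).le
  · exact integrableOn_stdPhi _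

lemma stdPhiCDF_le_one (x : ℝ) : stdPhiCDF x ≤ 1 := by
  rw [← integral_stdPhi]
  unfold stdPhiCDF
  exact setIntegral_le_integral integrable_stdPhi
    (by filter_upwards with u using (stdPhi_pos u).le)

lemma stdPhiCDF_nonneg (x : ℝ) : 0 ≤ stdPhiCDF x := (stdPhiCDF_pos x).le

lemma stdPhiCDF_neg_eq (x : ℝ) : stdPhiCDF (-x) = ∫ u in Ici x, stdPhi u := by
  unfold stdPhiCDF
  rw [← integral_comp_neg_Ioi x stdPhi]
  rw [integral_Ici_eq_integral_Ioi]
  refine setIntegral_congr_fun measurableSet_Ioi fun u _ => ?_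
  unfold stdPhi
  norm_num

lemma stdPhiCDF_tendsto_atBot : Tendsto stdPhiCDF atBot (nhds 0) := by
  have hub : ∀ x : ℝ, x ≤ -2 → stdPhiCDF x ≤ Real.exp 1 * Real.exp x := by
    intro x hx
    unfold stdPhiCDF
    have h1 : (Real.sqrt (2 * Real.pi))⁻¹ ≤ Real.exp 1 := by
      have h1a : (1:ℝ) ≤ Real.sqrt (2 * Real.pi) := by
        rw [show (1:ℝ) = Real.sqrt 1 by simp]
        apply Real.sqrt_le_sqrt
        nlinarith [Real.pi_gt_three]
      calc (Real.sqrt (2 * Real.pi))⁻¹ ≤ 1 := by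
            rw [inv_le_one_iff₀]; right; exact h1a
        _ ≤ Real.exp 1 := by nlinarith [Real.add_one_le_exp (1:ℝ)]
    calc ∫ u in Iic x, stdPhi u ≤ ∫ u in Iic x, Real.exp 1 * Real.exp u := by
          apply setIntegral_mono_on (integrableOn_stdPhi _)
            (((integrableOn_exp_Iic x).const_mul _))
            measurableSet_Iic
          intro u hu
          simp only [mem_Iic] at hu
          unfold stdPhi
          have h2 : Real.exp (-u ^ 2 / 2) ≤ Real.exp u := by
            apply Real.exp_le_exp.mpr
            nlinarith [hu.trans hx]
          exact mul_le_mul h1 h2 (by positivity) (by positivity)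
      _ = Real.exp 1 * Real.exp x := by rw [integral_const_mul, integral_exp_Iic]
  have h0 : Tendsto (fun x : ℝ => Real.exp 1 * Real.exp x) atBot (nhds 0) := by
    simpa using (Real.tendsto_exp_atBot).const_mul (Real.exp 1)
  refine tendsto_of_tendsto_of_tendsto_of_le_of_le' (g := fun _ => (0:ℝ)) tendsto_const_nhds h0
    (Eventually.of_forall fun x => stdPhiCDF_nonneg x) ?_
  filter_upwards [eventually_le_atBot (-2:ℝ)] with x hx using hub x hx


section g
variable {k ρ : ℝ} (hk : 0 < k) (hρ : ρ ∈ Set.Ioo (0:ℝ) 1)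

lemma tau_pos (hρ : ρ ∈ Set.Ioo (0:ℝ) 1) : 0 < 1 - ρ ^ 2 := by
  obtain ⟨h1, h2⟩ := hρ; nlinarith

lemma key_identity (hρ : ρ ∈ Set.Ioo (0:ℝ) 1) (x : ℝ) :
    Real.exp (k * x + k ^ 2 * (1 - ρ ^ 2) / 2) *
      stdPhi ((x + k * (1 - ρ ^ 2)) / Real.sqrt (1 - ρ ^ 2)) =
    stdPhi (x / Real.sqrt (1 - ρ ^ 2)) := by
  have hτ := tau_pos hρ
  have hs : Real.sqrt (1 - ρ ^ 2) ^ 2 = 1 - ρ ^ 2 := Real.sq_sqrt hτ.le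
  have hs0 : Real.sqrt (1 - ρ ^ 2) ≠ 0 := by positivity
  unfold stdPhi
  rw [← mul_assoc, mul_comm (Real.exp _) ((Real.sqrt (2*Real.pi))⁻¹), mul_assoc, ← Real.exp_add]
  congr 1
  congr 1
  have := hτ.ne'
  rw [div_pow, div_pow, hs]
  field_simp
  ring
lemma hasDerivAt_gkr (hρ : ρ ∈ Set.Ioo (0:ℝ) 1) (x : ℝ) :
    HasDerivAt (gkr k ρ)
      (k * (Real.exp (k * x + k ^ 2 * (1 - ρ ^ 2) / 2) *
        stdPhiCDF ((x + k * (1 - ρ ^ 2)) / Real.sqrt (1 - ρ ^ 2)))) x := by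
  have hτ := tau_pos hρ
  have hs0 : Real.sqrt (1 - ρ ^ 2) ≠ 0 := by positivity
  have hkey := key_identity (k := k) hρ x
  set σ := Real.sqrt (1 - ρ ^ 2) with hσ
  set τ := 1 - ρ ^ 2 with hτdef
  have h1 : HasDerivAt (fun x => Real.exp (k * x + k ^ 2 * τ / 2))
      (k * Real.exp (k * x + k ^ 2 * τ / 2)) x := by
    have h0 : HasDerivAt (fun x : ℝ => k * x + k ^ 2 * τ / 2) k x := by
      simpa using ((hasDerivAt_id x).const_mul k).add_const (k ^ 2 * τ / 2)
    simpa [mul_comm] using h0.exp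
  have haff : HasDerivAt (fun x : ℝ => (x + k * τ) / σ) (1 / σ) x := by
    simpa using ((hasDerivAt_id x).add_const (k * τ)).div_const σ
  have h2 : HasDerivAt (fun x => stdPhiCDF ((x + k * τ) / σ))
      (stdPhi ((x + k * τ) / σ) * (1 / σ)) x :=
    (hasDerivAt_stdPhiCDF _).comp x haff
  have haff2 : HasDerivAt (fun x : ℝ => x / σ) (1 / σ) x := by
    simpa using (hasDerivAt_id x).div_const σ
  have h3 : HasDerivAt (fun x => stdPhiCDF (x / σ)) (stdPhi (x / σ) * (1 / σ)) x :=
    (hasDerivAt_stdPhiCDF _).comp x haff2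
  have h4 := (h1.mul h2).sub h3
  refine h4.congr_deriv ?_
  linear_combination (1 / σ) * hkey

lemma gkr_continuous (hρ : ρ ∈ Set.Ioo (0:ℝ) 1) : Continuous (gkr k ρ) :=
  continuous_iff_continuousAt.mpr fun x => (hasDerivAt_gkr hρ x).continuousAt

lemma strictMono_gkr (hk : 0 < k) (hρ : ρ ∈ Set.Ioo (0:ℝ) 1) : StrictMono (gkr k ρ) := by
  apply strictMono_of_deriv_pos
  intro x
  rw [(hasDerivAt_gkr hρ x).deriv]
  have := stdPhiCDF_pos ((x + k * (1 - ρ ^ 2)) / Real.sqrt (1 - ρ ^ 2))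
  positivity

lemma gkr_tendsto_atBot (hk : 0 < k) (hρ : ρ ∈ Set.Ioo (0:ℝ) 1) : Tendsto (gkr k ρ) atBot (nhds 0) := by
  have hτ := tau_pos hρ
  have hs : 0 < Real.sqrt (1 - ρ ^ 2) := by positivity
  unfold gkr
  have h1 : Tendsto (fun x => Real.exp (k * x + k ^ 2 * (1 - ρ ^ 2) / 2) *
      stdPhiCDF ((x + k * (1 - ρ ^ 2)) / Real.sqrt (1 - ρ ^ 2))) atBot (nhds 0) := by
    have hE : Tendsto (fun x => Real.exp (k * x + k ^ 2 * (1 - ρ ^ 2) / 2)) atBot (nhds 0) := by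
      apply Real.tendsto_exp_atBot.comp
      apply tendsto_atBot_add_const_right
      exact (tendsto_id.const_mul_atBot hk)
    refine tendsto_of_tendsto_of_tendsto_of_le_of_le' (g := fun _ => (0:ℝ))
      tendsto_const_nhds hE ?_ ?_
    · filter_upwards with x
      have := stdPhiCDF_nonneg ((x + k * (1 - ρ ^ 2)) / Real.sqrt (1 - ρ ^ 2))
      positivity
    · filter_upwards with x
      calc Real.exp (k * x + k ^ 2 * (1 - ρ ^ 2) / 2) *
            stdPhiCDF ((x + k * (1 - ρ ^ 2)) / Real.sqrt (1 - ρ ^ 2))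
          ≤ Real.exp (k * x + k ^ 2 * (1 - ρ ^ 2) / 2) * 1 :=
            mul_le_mul_of_nonneg_left (stdPhiCDF_le_one _) (Real.exp_pos _).le
        _ = _ := by rw [mul_one]
  have h2 : Tendsto (fun x : ℝ => stdPhiCDF (x / Real.sqrt (1 - ρ ^ 2))) atBot (nhds 0) := by
    apply stdPhiCDF_tendsto_atBot.comp
    exact (tendsto_id.atBot_div_const hs)
  simpa using h1.sub h2


lemma gkr_pos (hk : 0 < k) (hρ : ρ ∈ Set.Ioo (0:ℝ) 1) (x : ℝ) : 0 < gkr k ρ x := by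
  have hmono := strictMono_gkr hk hρ
  have hge : 0 ≤ gkr k ρ (x - 1) := by
    have hev : ∀ᶠ y in atBot, gkr k ρ y ≤ gkr k ρ (x - 1) := by
      filter_upwards [eventually_le_atBot (x - 1)] with y hy
      exact hmono.monotone hy
    exact le_of_tendsto (gkr_tendsto_atBot hk hρ) hev
  exact lt_of_le_of_lt hge (hmono (by linarith))

lemma gkr_le (hρ : ρ ∈ Set.Ioo (0:ℝ) 1) (x : ℝ) :
    gkr k ρ x ≤ Real.exp (k * x + k ^ 2 * (1 - ρ ^ 2) / 2) := by
  unfold gkr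
  have h1 : Real.exp (k * x + k ^ 2 * (1 - ρ ^ 2) / 2) *
      stdPhiCDF ((x + k * (1 - ρ ^ 2)) / Real.sqrt (1 - ρ ^ 2)) ≤
      Real.exp (k * x + k ^ 2 * (1 - ρ ^ 2) / 2) * 1 :=
    mul_le_mul_of_nonneg_left (stdPhiCDF_le_one _) (Real.exp_pos _).le
  have h2 := stdPhiCDF_nonneg (x / Real.sqrt (1 - ρ ^ 2))
  linarith

lemma gkr_tendsto_atTop (hk : 0 < k) (hρ : ρ ∈ Set.Ioo (0:ℝ) 1) :
    Tendsto (gkr k ρ) atTop atTop := by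
  have hτ := tau_pos hρ
  have hs : 0 < Real.sqrt (1 - ρ ^ 2) := by positivity
  set C := stdPhiCDF (k * (1 - ρ ^ 2) / Real.sqrt (1 - ρ ^ 2)) with hC
  have hCpos : 0 < C := stdPhiCDF_pos _
  have hlow : ∀ᶠ x in atTop, Real.exp (k * x + k ^ 2 * (1 - ρ ^ 2) / 2) * C - 1 ≤ gkr k ρ x := by
    filter_upwards [eventually_ge_atTop (0:ℝ)] with x hx
    unfold gkr
    have hm : C ≤ stdPhiCDF ((x + k * (1 - ρ ^ 2)) / Real.sqrt (1 - ρ ^ 2)) := by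
      apply (strictMono_stdPhiCDF.monotone)
      gcongr
      linarith
    have h2 := stdPhiCDF_le_one (x / Real.sqrt (1 - ρ ^ 2))
    nlinarith [Real.exp_pos (k * x + k ^ 2 * (1 - ρ ^ 2) / 2)]
  apply tendsto_atTop_mono' _ hlow
  apply tendsto_atTop_add_const_right
  apply Tendsto.atTop_mul_const hCpos
  apply Real.tendsto_exp_atTop.comp
  apply tendsto_atTop_add_const_right
  exact tendsto_id.const_mul_atTop hk

section J

variable {k ρ c₁ c₂ a : ℝ}

lemma integrable_gphi (hk : 0 < k) (hρ : ρ ∈ Set.Ioo (0:ℝ) 1) (t : ℝ) :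
    Integrable (fun s => gkr k ρ (ρ * s - ρ * t - a) * stdPhi s) := by
  have hB : Integrable (fun s => Real.exp (k * (-ρ * t - a) + k ^ 2 * (1 - ρ ^ 2) / 2) *
      (Real.exp ((k * ρ) * s) * stdPhi s)) :=
    ((integrable_exp_mul_stdPhi (k * ρ))).const_mul _
  apply hB.mono
  · apply Continuous.aestronglyMeasurable
    exact ((gkr_continuous (k := k) hρ).comp (by continuity)).mul continuous_stdPhi
  · filter_upwards with s
    have hg0 := gkr_pos hk hρ (ρ * s - ρ * t - a)
    have hgle := gkr_le (k := k) hρ (ρ * s - ρ * t - a)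
    have hφ := (stdPhi_pos s).le
    rw [Real.norm_eq_abs, Real.norm_eq_abs, abs_of_nonneg (mul_nonneg hg0.le hφ),
      abs_of_nonneg (mul_nonneg (Real.exp_pos _).le (mul_nonneg (Real.exp_pos _).le hφ))]
    have : Real.exp (k * (ρ * s - ρ * t - a) + k ^ 2 * (1 - ρ ^ 2) / 2) =
        Real.exp (k * (-ρ * t - a) + k ^ 2 * (1 - ρ ^ 2) / 2) * Real.exp ((k * ρ) * s) := by
      rw [← Real.exp_add]; ring_nf
    nlinarith [mul_le_mul_of_nonneg_right hgle hφ]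

lemma integrable_Fphi (hk : 0 < k) (hρ : ρ ∈ Set.Ioo (0:ℝ) 1) (hc₁ : 0 < c₁) (t : ℝ) :
    Integrable (fun s => (gkr k ρ (ρ * s - ρ * t - a) - c₁) * stdPhi s) := by
  have h2 : Integrable (fun s => c₁ * stdPhi s) := integrable_stdPhi.const_mul c₁
  have := (integrable_gphi (a := a) hk hρ t).sub h2
  exact this.congr (by filter_upwards with s; simp only [Pi.sub_apply]; ring)

lemma Jres_eq (hk : 0 < k) (hρ : ρ ∈ Set.Ioo (0:ℝ) 1) (hc₁ : 0 < c₁) (t : ℝ) :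
    Jres k ρ c₁ c₂ a t =
      (∫ s in Set.Ici t, (gkr k ρ (ρ * s - ρ * t - a) - c₁) * stdPhi s) - c₂ := by
  unfold Jres
  rw [stdPhiCDF_neg_eq, ← integral_const_mul]
  rw [← integral_sub ((integrable_gphi hk hρ t).integrableOn)
    ((integrable_stdPhi.const_mul c₁).integrableOn)]
  congr 1
  · refine setIntegral_congr_fun measurableSet_Ici fun s _ => by ring

lemma F_nonneg (hk : 0 < k) (hρ : ρ ∈ Set.Ioo (0:ℝ) 1)
    (ha : gkr k ρ (-a) = c₁) {t s : ℝ} (hs : t ≤ s) :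
    0 ≤ (gkr k ρ (ρ * s - ρ * t - a) - c₁) * stdPhi s := by
  have : c₁ ≤ gkr k ρ (ρ * s - ρ * t - a) := by
    rw [← ha]
    apply (strictMono_gkr hk hρ).monotone
    nlinarith [hρ.1]
  have := stdPhi_pos s
  nlinarith

lemma Jres_strictAnti (hk : 0 < k) (hρ : ρ ∈ Set.Ioo (0:ℝ) 1) (hc₁ : 0 < c₁)
    (ha : gkr k ρ (-a) = c₁) : StrictAnti (Jres k ρ c₁ c₂ a) := by
  intro t₁ t₂ hlt
  rw [Jres_eq hk hρ hc₁, Jres_eq hk hρ hc₁]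
  have hsplit : (∫ s in Set.Ici t₁, (gkr k ρ (ρ * s - ρ * t₁ - a) - c₁) * stdPhi s) =
      (∫ s in Set.Ico t₁ t₂, (gkr k ρ (ρ * s - ρ * t₁ - a) - c₁) * stdPhi s) +
      (∫ s in Set.Ici t₂, (gkr k ρ (ρ * s - ρ * t₁ - a) - c₁) * stdPhi s) := by
    rw [← setIntegral_union ((Iio_disjoint_Ici le_rfl).mono_left Ico_subset_Iio_self) measurableSet_Ici
      ((integrable_Fphi hk hρ hc₁ t₁).integrableOn)
      ((integrable_Fphi hk hρ hc₁ t₁).integrableOn),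
      Ico_union_Ici_eq_Ici hlt.le]
  have h1 : 0 ≤ ∫ s in Set.Ico t₁ t₂, (gkr k ρ (ρ * s - ρ * t₁ - a) - c₁) * stdPhi s := by
    apply setIntegral_nonneg measurableSet_Ico
    intro s hs
    exact F_nonneg hk hρ ha hs.1
  have h2 : (∫ s in Set.Ici t₂, (gkr k ρ (ρ * s - ρ * t₂ - a) - c₁) * stdPhi s) <
      ∫ s in Set.Ici t₂, (gkr k ρ (ρ * s - ρ * t₁ - a) - c₁) * stdPhi s := by
    rw [← sub_pos, ← integral_sub ((integrable_Fphi hk hρ hc₁ t₁).integrableOn)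
      ((integrable_Fphi hk hρ hc₁ t₂).integrableOn)]
    have heq : ∀ s : ℝ, (gkr k ρ (ρ * s - ρ * t₁ - a) - c₁) * stdPhi s -
        (gkr k ρ (ρ * s - ρ * t₂ - a) - c₁) * stdPhi s =
        (gkr k ρ (ρ * s - ρ * t₁ - a) - gkr k ρ (ρ * s - ρ * t₂ - a)) * stdPhi s := by
      intro s; ring
    simp_rw [heq]
    have hposall : ∀ s : ℝ, 0 < (gkr k ρ (ρ * s - ρ * t₁ - a) - gkr k ρ (ρ * s - ρ * t₂ - a)) *
        stdPhi s := by
      intro s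
      have : gkr k ρ (ρ * s - ρ * t₂ - a) < gkr k ρ (ρ * s - ρ * t₁ - a) := by
        apply strictMono_gkr hk hρ
        nlinarith [hρ.1]
      have := stdPhi_pos s
      nlinarith
    rw [setIntegral_pos_iff_support_of_nonneg_ae]
    · have hsupp : Function.support (fun s => (gkr k ρ (ρ * s - ρ * t₁ - a) -
          gkr k ρ (ρ * s - ρ * t₂ - a)) * stdPhi s) = Set.univ := by
        ext s
        simp only [Function.mem_support, Set.mem_univ, iff_true]
        exact (hposall s).ne'
      rw [hsupp, Set.univ_inter, Real.volume_Ici]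
      simp
    · filter_upwards with s using (hposall s).le
    · apply Integrable.integrableOn
      have hi1 := integrable_Fphi (a := a) hk hρ hc₁ t₁
      have hi2 := integrable_Fphi (a := a) hk hρ hc₁ t₂
      exact (hi1.sub hi2).congr (by filter_upwards with s; simp only [Pi.sub_apply]; ring)
  linarith

end J

section J2
variable {k ρ c₁ c₂ a : ℝ}

lemma Jres_tendsto_atTop (hk : 0 < k) (hρ : ρ ∈ Set.Ioo (0:ℝ) 1) (hc₁ : 0 < c₁)
    (ha : gkr k ρ (-a) = c₁) :
    Tendsto (Jres k ρ c₁ c₂ a) atTop (nhds (-c₂)) := by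
  have key : Tendsto (fun t => ∫ s in Set.Ici t,
      (gkr k ρ (ρ * s - ρ * t - a) - c₁) * stdPhi s) atTop (nhds 0) := by
    set C := Real.exp (k * (-a) + k ^ 2 * (1 - ρ ^ 2) / 2) *
      ∫ s, Real.exp ((k * ρ) * s) * stdPhi s with hC
    have hIpos : 0 ≤ ∫ s, Real.exp ((k * ρ) * s) * stdPhi s :=
      integral_nonneg fun s => mul_nonneg (Real.exp_pos _).le (stdPhi_pos s).le
    have hub : ∀ t : ℝ, (∫ s in Set.Ici t, (gkr k ρ (ρ * s - ρ * t - a) - c₁) * stdPhi s)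
        ≤ Real.exp (-(k * ρ) * t) * C := by
      intro t
      have step1 : (∫ s in Set.Ici t, (gkr k ρ (ρ * s - ρ * t - a) - c₁) * stdPhi s)
          ≤ ∫ s in Set.Ici t, Real.exp (-(k*ρ)*t) *
            (Real.exp (k * (-a) + k ^ 2 * (1 - ρ ^ 2) / 2) * (Real.exp ((k*ρ)*s) * stdPhi s)) := by
        apply setIntegral_mono_on ((integrable_Fphi hk hρ hc₁ t).integrableOn)
          ((((integrable_exp_mul_stdPhi (k*ρ)).const_mul _).const_mul _).integrableOn)
          measurableSet_Ici
        intro s _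
        have hgle := gkr_le (k := k) hρ (ρ * s - ρ * t - a)
        have hφ := (stdPhi_pos s).le
        have hexp : Real.exp (k * (ρ * s - ρ * t - a) + k ^ 2 * (1 - ρ ^ 2) / 2) =
            Real.exp (-(k*ρ)*t) * (Real.exp (k * (-a) + k ^ 2 * (1 - ρ ^ 2) / 2) *
              Real.exp ((k*ρ)*s)) := by
          rw [← Real.exp_add, ← Real.exp_add]; ring_nf
        nlinarith [mul_le_mul_of_nonneg_right hgle hφ, mul_nonneg hc₁.le hφ]
      have step2 : (∫ s in Set.Ici t, Real.exp (-(k*ρ)*t) *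
            (Real.exp (k * (-a) + k ^ 2 * (1 - ρ ^ 2) / 2) * (Real.exp ((k*ρ)*s) * stdPhi s)))
          ≤ Real.exp (-(k * ρ) * t) * C := by
        rw [integral_const_mul, integral_const_mul, hC]
        apply mul_le_mul_of_nonneg_left _ (Real.exp_pos _).le
        apply mul_le_mul_of_nonneg_left _ (Real.exp_pos _).le
        exact setIntegral_le_integral (integrable_exp_mul_stdPhi (k*ρ))
          (by filter_upwards with s using mul_nonneg (Real.exp_pos _).le (stdPhi_pos s).le)
      linarith
    have hlb : ∀ t : ℝ, 0 ≤ ∫ s in Set.Ici t, (gkr k ρ (ρ * s - ρ * t - a) - c₁) * stdPhi s :=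
      fun t => setIntegral_nonneg measurableSet_Ici fun s hs => F_nonneg hk hρ ha hs
    have hC0 : Tendsto (fun t : ℝ => Real.exp (-(k * ρ) * t) * C) atTop (nhds 0) := by
      rw [show (0:ℝ) = 0 * C by ring]
      apply Tendsto.mul_const
      apply Real.tendsto_exp_atBot.comp
      have hkρ : 0 < k * ρ := mul_pos hk hρ.1
      exact tendsto_id.const_mul_atTop_of_neg (by linarith)
    exact tendsto_of_tendsto_of_tendsto_of_le_of_le tendsto_const_nhds hC0 hlb hub
  have : Jres k ρ c₁ c₂ a = fun t => (∫ s in Set.Ici t,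
      (gkr k ρ (ρ * s - ρ * t - a) - c₁) * stdPhi s) - c₂ := by
    funext t; exact Jres_eq hk hρ hc₁ t
  rw [this]
  simpa using key.sub_const c₂


lemma Jres_tendsto_atBot (hk : 0 < k) (hρ : ρ ∈ Set.Ioo (0:ℝ) 1) (hc₁ : 0 < c₁)
    (ha : gkr k ρ (-a) = c₁) :
    Tendsto (Jres k ρ c₁ c₂ a) atBot atTop := by
  have hlow : ∀ᶠ t in atBot, (gkr k ρ (-(ρ * t) - a) - c₁) * stdPhi 1 - c₂ ≤
      Jres k ρ c₁ c₂ a t := by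
    filter_upwards [eventually_le_atBot (0:ℝ)] with t ht
    rw [Jres_eq hk hρ hc₁]
    have hmono : (∫ s in Set.Icc (0:ℝ) 1, (gkr k ρ (ρ * s - ρ * t - a) - c₁) * stdPhi s)
        ≤ ∫ s in Set.Ici t, (gkr k ρ (ρ * s - ρ * t - a) - c₁) * stdPhi s := by
      apply setIntegral_mono_set ((integrable_Fphi hk hρ hc₁ t).integrableOn)
      · filter_upwards [ae_restrict_mem measurableSet_Ici] with s hs
        exact F_nonneg hk hρ ha hs
      · refine HasSubset.Subset.eventuallyLE fun s hs => le_trans ht hs.1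
    have hconst : (gkr k ρ (-(ρ * t) - a) - c₁) * stdPhi 1
        ≤ ∫ s in Set.Icc (0:ℝ) 1, (gkr k ρ (ρ * s - ρ * t - a) - c₁) * stdPhi s := by
      have heval : (gkr k ρ (-(ρ * t) - a) - c₁) * stdPhi 1 =
          ∫ _ in Set.Icc (0:ℝ) 1, (gkr k ρ (-(ρ * t) - a) - c₁) * stdPhi 1 := by
        rw [setIntegral_const]
        simp [Real.volume_Icc]
      rw [heval]
      apply setIntegral_mono_on (integrableOn_const (by simp [Real.volume_Icc]))
        ((integrable_Fphi hk hρ hc₁ t).integrableOn) measurableSet_Icc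
      intro s hs
      have h1 : gkr k ρ (-(ρ * t) - a) ≤ gkr k ρ (ρ * s - ρ * t - a) := by
        apply (strictMono_gkr hk hρ).monotone
        nlinarith [hρ.1, hs.1]
      have h2 : c₁ ≤ gkr k ρ (-(ρ * t) - a) := by
        rw [← ha]
        apply (strictMono_gkr hk hρ).monotone
        nlinarith [hρ.1]
      have h3 : stdPhi 1 ≤ stdPhi s := by
        unfold stdPhi
        apply mul_le_mul_of_nonneg_left _ (by positivity)
        apply Real.exp_le_exp.mpr
        nlinarith [hs.1, hs.2]
      have h4 := (stdPhi_pos 1).le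
      nlinarith
    linarith
  apply tendsto_atTop_mono' _ hlow
  apply tendsto_atTop_add_const_right
  apply Tendsto.atTop_mul_const (stdPhi_pos 1)
  apply tendsto_atTop_add_const_right
  apply (gkr_tendsto_atTop hk hρ).comp
  apply tendsto_atTop_add_const_right
  have := hρ.1
  exact (tendsto_neg_atBot_atTop).comp (tendsto_id.const_mul_atBot hρ.1)

lemma subst_lemma (hk : 0 < k) (hρ : ρ ∈ Set.Ioo (0:ℝ) 1) (hc₁ : 0 < c₁) (t : ℝ) :
    (∫ s in Set.Ici t, (gkr k ρ (ρ * s - ρ * t - a) - c₁) * stdPhi s)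
      = ∫ u in Set.Ici (0:ℝ), (gkr k ρ (ρ * u - a) - c₁) * stdPhi (u + t) := by
  have h1 : (∫ s in Set.Ici t, (gkr k ρ (ρ * s - ρ * t - a) - c₁) * stdPhi s)
      = ∫ s, (Set.Ici t).indicator (fun s => (gkr k ρ (ρ * s - ρ * t - a) - c₁) * stdPhi s) s := by
    rw [integral_indicator measurableSet_Ici]
  have h2 : (∫ u in Set.Ici (0:ℝ), (gkr k ρ (ρ * u - a) - c₁) * stdPhi (u + t))
      = ∫ u, (Set.Ici (0:ℝ)).indicator (fun u => (gkr k ρ (ρ * u - a) - c₁) * stdPhi (u + t)) u := by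
    rw [integral_indicator measurableSet_Ici]
  rw [h1, h2]
  rw [← integral_add_right_eq_self (μ := volume)
    ((Set.Ici t).indicator (fun s => (gkr k ρ (ρ * s - ρ * t - a) - c₁) * stdPhi s)) t]
  congr 1
  funext u
  by_cases hu : 0 ≤ u
  · rw [Set.indicator_of_mem (show u ∈ Set.Ici (0:ℝ) by simpa using hu),
      Set.indicator_of_mem (show u + t ∈ Set.Ici t by simp only [Set.mem_Ici]; linarith)]
    have : ρ * (u + t) - ρ * t - a = ρ * u - a := by ring
    rw [this]
  · rw [Set.indicator_of_notMem (show u ∉ Set.Ici (0:ℝ) by simpa using hu),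
      Set.indicator_of_notMem (show u + t ∉ Set.Ici t by simp only [Set.mem_Ici]; intro h; linarith)]

lemma Jres_continuous (hk : 0 < k) (hρ : ρ ∈ Set.Ioo (0:ℝ) 1) (hc₁ : 0 < c₁)
    (ha : gkr k ρ (-a) = c₁) : Continuous (Jres k ρ c₁ c₂ a) := by
  rw [continuous_iff_continuousAt]
  intro t₀
  have hform : Jres k ρ c₁ c₂ a = fun t =>
      (∫ u in Set.Ici (0:ℝ), (gkr k ρ (ρ * u - a) - c₁) * stdPhi (u + t)) - c₂ := by
    funext t
    rw [Jres_eq hk hρ hc₁, subst_lemma hk hρ hc₁]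
  rw [hform]
  apply ContinuousAt.sub _ continuousAt_const
  set C := Real.exp (k * (-a) + k ^ 2 * (1 - ρ ^ 2) / 2 + |t₀| + 1) with hCdef
  apply continuousAt_of_dominated (bound := fun u =>
    C * (Real.exp ((k * ρ + 1) * u) * stdPhi (u + t₀)))
  · filter_upwards with t
    apply Continuous.aestronglyMeasurable
    apply Continuous.mul
    · exact ((gkr_continuous (k := k) hρ).comp (by continuity)).sub continuous_const
    · exact continuous_stdPhi.comp (by continuity)
  · filter_upwards [Metric.ball_mem_nhds t₀ one_pos] with t ht
    filter_upwards [ae_restrict_mem measurableSet_Ici] with u hu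
    simp only [Set.mem_Ici] at hu
    rw [Metric.mem_ball, Real.dist_eq] at ht
    have htt₀ := abs_le.mp (le_of_lt ht)
    have hgge : c₁ ≤ gkr k ρ (ρ * u - a) := by
      rw [← ha]
      apply (strictMono_gkr hk hρ).monotone
      nlinarith [hρ.1]
    have hgle := gkr_le (k := k) hρ (ρ * u - a)
    have hφt := (stdPhi_pos (u + t)).le
    rw [Real.norm_eq_abs, abs_of_nonneg (mul_nonneg (by linarith) hφt)]
    have key : Real.exp (k * (ρ * u - a) + k ^ 2 * (1 - ρ ^ 2) / 2) * stdPhi (u + t)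
        ≤ C * (Real.exp ((k * ρ + 1) * u) * stdPhi (u + t₀)) := by
      unfold stdPhi
      rw [hCdef]
      have hpi : 0 < (Real.sqrt (2 * Real.pi))⁻¹ := by positivity
      rw [show Real.exp (k * (ρ * u - a) + k ^ 2 * (1 - ρ ^ 2) / 2) *
          ((Real.sqrt (2 * Real.pi))⁻¹ * Real.exp (-(u + t) ^ 2 / 2)) =
          (Real.sqrt (2 * Real.pi))⁻¹ *
            Real.exp (k * (ρ * u - a) + k ^ 2 * (1 - ρ ^ 2) / 2 + -(u + t) ^ 2 / 2) by
        simp only [Real.exp_add]; ring]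
      rw [show Real.exp (k * (-a) + k ^ 2 * (1 - ρ ^ 2) / 2 + |t₀| + 1) *
          (Real.exp ((k * ρ + 1) * u) *
            ((Real.sqrt (2 * Real.pi))⁻¹ * Real.exp (-(u + t₀) ^ 2 / 2))) =
          (Real.sqrt (2 * Real.pi))⁻¹ *
            Real.exp (k * (-a) + k ^ 2 * (1 - ρ ^ 2) / 2 + |t₀| + 1 + (k * ρ + 1) * u +
              -(u + t₀) ^ 2 / 2) by
        simp only [Real.exp_add]; ring]
      apply mul_le_mul_of_nonneg_left _ hpi.le
      apply Real.exp_le_exp.mpr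
      nlinarith [le_abs_self t₀, neg_abs_le t₀]
    calc (gkr k ρ (ρ * u - a) - c₁) * stdPhi (u + t)
        ≤ Real.exp (k * (ρ * u - a) + k ^ 2 * (1 - ρ ^ 2) / 2) * stdPhi (u + t) := by
          nlinarith
      _ ≤ _ := key
  · exact ((integrable_exp_mul_stdPhi_shift (k * ρ + 1) t₀).const_mul C).integrableOn
  · filter_upwards with u
    exact (continuousAt_const.mul (continuous_stdPhi.comp (by continuity)).continuousAt)

theorem Jres_strictAnti_unique_zero
    (k ρ c₁ c₂ a : ℝ) (hk : 0 < k) (hρ : ρ ∈ Set.Ioo (0 : ℝ) 1)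
    (hc₁ : 0 < c₁) (hc₂ : 0 < c₂)
    (ha : gkr k ρ (-a) = c₁) :
    StrictAnti (Jres k ρ c₁ c₂ a) ∧
    Filter.Tendsto (Jres k ρ c₁ c₂ a) Filter.atBot Filter.atTop ∧
    Filter.Tendsto (Jres k ρ c₁ c₂ a) Filter.atTop (nhds (-c₂)) ∧
    ∃! t : ℝ, Jres k ρ c₁ c₂ a t = 0 := by
  have hanti := Jres_strictAnti (c₂ := c₂) hk hρ hc₁ ha
  have hbot := Jres_tendsto_atBot (c₂ := c₂) hk hρ hc₁ ha
  have htop := Jres_tendsto_atTop (c₂ := c₂) hk hρ hc₁ ha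
  refine ⟨hanti, hbot, htop, ?_⟩
  have h1 : ∃ t₁, 0 < Jres k ρ c₁ c₂ a t₁ := (hbot.eventually_gt_atTop 0).exists
  have h2 : ∃ t₂, Jres k ρ c₁ c₂ a t₂ < 0 := by
    have : (-c₂ : ℝ) < 0 := by linarith
    exact (htop.eventually (eventually_lt_nhds this)).exists
  obtain ⟨t₁, ht₁⟩ := h1
  obtain ⟨t₂, ht₂⟩ := h2
  have hlt : t₁ < t₂ := by
    by_contra h
    push_neg at h
    have := hanti.antitone h
    linarith
  have hcont := Jres_continuous (c₂ := c₂) hk hρ hc₁ ha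
  have hIVT := intermediate_value_Icc' hlt.le hcont.continuousOn
  have h0 : (0:ℝ) ∈ Set.Icc (Jres k ρ c₁ c₂ a t₂) (Jres k ρ c₁ c₂ a t₁) := ⟨ht₂.le, ht₁.le⟩
  obtain ⟨t, _, ht⟩ := hIVT h0
  exact ⟨t, ht, fun y hy => hanti.injective (by rw [hy, ht])⟩
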